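/- arXiv:math/0507569 — 3 statements merged into one kernel-verified Lean document; each statement's English description precedes it below -/
import Mathlib

section
/- (Weyl–van der Corput inequality) Let K be a positive integer and let z_k ∈ ℂ be complex numbers for k = K+1, …, 2K. Then for any positive integer Q ≤ K, |∑_{K < k ≤ 2K} z_k|² ≤ ((K+Q)/Q) · Re( ∑_{|q| < Q} (1 − |q|/Q) ∑_{k : K < k ≤ 2K, K < k+q ≤ 2K} z_k · conj(z_{k+q}) ). -/
open Finset

/-- The Weyl–van der Corput inequality. -/
theorem weyl_van_der_corput (K : ℕ) (hK : 0 < K) (z : ℤ → ℂ)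
    (Q : ℕ) (hQ : 0 < Q) (hQK : Q ≤ K) :
    ‖∑ k ∈ Finset.Ioc (K : ℤ) (2 * K), z k‖ ^ 2 ≤
      ((K + Q : ℝ) / Q) *
        (∑ q ∈ Finset.Ioo (-(Q : ℤ)) (Q : ℤ),
          ((1 - (|q| : ℝ) / Q : ℝ) : ℂ) *
            ∑ k ∈ (Finset.Ioc (K : ℤ) (2 * K)).filter
                (fun k => (K : ℤ) < k + q ∧ k + q ≤ 2 * K),
              z k * (starRingEnd ℂ) (z (k + q))).re := by
  classical
  set A : Finset ℤ := Finset.Ioc (K : ℤ) (2 * K) with hA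
  set f : ℤ → ℂ := fun k => if k ∈ A then z k else 0 with hf
  have hfz : ∀ k, k ∉ A → f k = 0 := by intro k hk; simp [hf, hk]
  have hfe : ∀ k ∈ A, f k = z k := by intro k hk; simp [hf, hk]
  set R : Finset ℤ := Finset.Ioc (0 : ℤ) (Q : ℤ) with hR
  set J : Finset ℤ := Finset.Ioc ((K : ℤ) - Q) (2 * K - 1) with hJ
  -- the shift lemma
  have shift : ∀ (g : ℤ → ℂ), (∀ k, k ∉ A → g k = 0) →
      ∀ r ∈ R, ∑ m ∈ J, g (m + r) = ∑ k ∈ A, g k := by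
    intro g hg r hr
    simp only [hR, Finset.mem_Ioc] at hr
    have h1 : ∑ m ∈ J, g (m + r) = ∑ k ∈ Finset.Ioc ((K : ℤ) - Q + r) (2 * K - 1 + r), g k := by
      rw [hJ, ← Finset.map_add_right_Ioc, Finset.sum_map]
      rfl
    rw [h1, hA]
    refine (Finset.sum_subset ?_ ?_).symm
    · intro x hx
      simp only [Finset.mem_Ioc] at hx ⊢
      omega
    · intro x _ hx
      exact hg x (by rwa [hA])
  set W : ℤ → ℂ := fun q => ∑ k ∈ A, f k * (starRingEnd ℂ) (f (k + q)) with hWdef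
  have hcardR : R.card = Q := by rw [hR, Int.card_Ioc]; omega
  -- step 1 : sum over J of T equals Q * S
  have h1 : ∑ m ∈ J, ∑ r ∈ R, f (m + r) = (Q : ℂ) * ∑ k ∈ A, z k := by
    rw [Finset.sum_comm]
    have e : ∀ r ∈ R, ∑ m ∈ J, f (m + r) = ∑ k ∈ A, z k := by
      intro r hr
      rw [shift f hfz r hr]
      exact Finset.sum_congr rfl hfe
    rw [Finset.sum_congr rfl e, Finset.sum_const, hcardR, nsmul_eq_mul]
  -- step 2 : expand |T m|^2 and shift
  have h2 : ∑ m ∈ J, (∑ r ∈ R, f (m + r)) * (starRingEnd ℂ) (∑ s ∈ R, f (m + s))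
      = ∑ p ∈ R ×ˢ R, W (p.2 - p.1) := by
    have e1 : ∀ m : ℤ, (∑ r ∈ R, f (m + r)) * (starRingEnd ℂ) (∑ s ∈ R, f (m + s))
        = ∑ p ∈ R ×ˢ R, f (m + p.1) * (starRingEnd ℂ) (f (m + p.2)) := by
      intro m
      rw [map_sum, Finset.sum_mul_sum, ← Finset.sum_product']
    rw [Finset.sum_congr rfl (fun m _ => e1 m), Finset.sum_comm]
    refine Finset.sum_congr rfl (fun p hp => ?_)
    simp only [Finset.mem_product] at hp
    have e2 : ∀ m : ℤ, f (m + p.1) * (starRingEnd ℂ) (f (m + p.2))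
        = (fun k => f k * (starRingEnd ℂ) (f (k + (p.2 - p.1)))) (m + p.1) := by
      intro m
      dsimp only
      rw [show m + p.1 + (p.2 - p.1) = m + p.2 by ring]
    rw [Finset.sum_congr rfl (fun m _ => e2 m)]
    exact shift (fun k => f k * (starRingEnd ℂ) (f (k + (p.2 - p.1))))
      (fun k hk => by rw [hfz k hk, zero_mul]) p.1 hp.1
  -- counting the fibers
  have hcount : ∀ q ∈ Finset.Ioo (-(Q:ℤ)) (Q:ℤ),
      ((R ×ˢ R).filter (fun p => p.2 - p.1 = q)).card = ((Q:ℤ) - |q|).toNat := by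
    intro q hq
    simp only [Finset.mem_Ioo] at hq
    have hcard : ((R ×ˢ R).filter (fun p => p.2 - p.1 = q)).card
        = (Finset.Ioc (max 0 (-q)) (min (Q:ℤ) ((Q:ℤ) - q))).card := by
      apply Finset.card_nbij' (fun p => p.1) (fun r => (r, r + q))
      · intro p hp
        simp only [hR, Finset.mem_coe, Finset.mem_filter, Finset.mem_product, Finset.mem_Ioc] at hp
        simp only [Finset.mem_coe, Finset.mem_Ioc]
        omega
      · intro r hr
        simp only [Finset.mem_coe, Finset.mem_Ioc] at hr
        simp only [hR, Finset.mem_coe, Finset.mem_filter, Finset.mem_product, Finset.mem_Ioc]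
        omega
      · intro p hp
        simp only [Finset.mem_coe, Finset.mem_filter, Finset.mem_product] at hp
        have := hp.2
        simp only [Prod.ext_iff]
        exact ⟨trivial, by omega⟩
      · intro r _; rfl
    rw [hcard, Int.card_Ioc]
    congr 1
    rcases le_or_gt 0 q with h | h
    · rw [abs_of_nonneg h]; omega
    · rw [abs_of_neg h]; omega
  -- step 3 : collect fibers
  have h3 : ∑ p ∈ R ×ˢ R, W (p.2 - p.1)
      = ∑ q ∈ Finset.Ioo (-(Q:ℤ)) (Q:ℤ), (((Q:ℤ) - |q| : ℤ) : ℂ) * W q := by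
    have hmaps : ∀ p ∈ R ×ˢ R, p.2 - p.1 ∈ Finset.Ioo (-(Q:ℤ)) (Q:ℤ) := by
      intro p hp
      simp only [hR, Finset.mem_product, Finset.mem_Ioc] at hp
      simp only [Finset.mem_Ioo]
      omega
    rw [← Finset.sum_fiberwise_of_maps_to hmaps (fun p => W (p.2 - p.1))]
    refine Finset.sum_congr rfl (fun q hq => ?_)
    rw [Finset.sum_congr rfl
        (fun p hp => by rw [(Finset.mem_filter.mp hp).2] : ∀ p ∈ (R ×ˢ R).filter (fun p => p.2 - p.1 = q), W (p.2 - p.1) = W q),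
      Finset.sum_const, hcount q hq, nsmul_eq_mul]
    congr 1
    have hnn : (0:ℤ) ≤ (Q:ℤ) - |q| := by
      simp only [Finset.mem_Ioo] at hq
      rcases le_or_gt 0 q with h | h
      · rw [abs_of_nonneg h]; omega
      · rw [abs_of_neg h]; omega
    rw [← Int.cast_natCast, Int.toNat_of_nonneg hnn]
  -- real part equals sum of squared norms
  have hre : (∑ m ∈ J, (∑ r ∈ R, f (m + r)) * (starRingEnd ℂ) (∑ s ∈ R, f (m + s))).re
      = ∑ m ∈ J, ‖∑ r ∈ R, f (m + r)‖ ^ 2 := by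
    rw [Complex.re_sum]
    refine Finset.sum_congr rfl (fun m _ => ?_)
    rw [Complex.mul_conj, Complex.ofReal_re, Complex.normSq_eq_norm_sq]
  set Er : ℝ := (∑ q ∈ Finset.Ioo (-(Q:ℤ)) (Q:ℤ), (((Q:ℤ) - |q| : ℤ) : ℂ) * W q).re with hEr
  have hEeq : Er = ∑ m ∈ J, ‖∑ r ∈ R, f (m + r)‖ ^ 2 := by
    rw [hEr, ← h3, ← h2, hre]
  have hErnn : 0 ≤ Er := by
    rw [hEeq]
    positivity
  -- Cauchy-Schwarz
  have hcardJ : (J.card : ℝ) ≤ (K : ℝ) + Q := by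
    have : J.card ≤ K + Q := by
      rw [hJ, Int.card_Ioc]
      omega
    calc (J.card : ℝ) ≤ ((K + Q : ℕ) : ℝ) := by exact_mod_cast this
      _ = (K : ℝ) + Q := by push_cast; ring
  have hCS : ‖∑ m ∈ J, ∑ r ∈ R, f (m + r)‖ ^ 2 ≤ ((K : ℝ) + Q) * Er := by
    calc ‖∑ m ∈ J, ∑ r ∈ R, f (m + r)‖ ^ 2
        ≤ (∑ m ∈ J, ‖∑ r ∈ R, f (m + r)‖) ^ 2 := by
          apply pow_le_pow_left₀ (norm_nonneg _) (norm_sum_le _ _)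
      _ ≤ (J.card : ℝ) * ∑ m ∈ J, ‖∑ r ∈ R, f (m + r)‖ ^ 2 :=
          sq_sum_le_card_mul_sum_sq
      _ = (J.card : ℝ) * Er := by rw [hEeq]
      _ ≤ ((K : ℝ) + Q) * Er := mul_le_mul_of_nonneg_right hcardJ hErnn
  have hmain : (Q : ℝ) ^ 2 * ‖∑ k ∈ A, z k‖ ^ 2 ≤ ((K : ℝ) + Q) * Er := by
    have : ‖(Q : ℂ) * ∑ k ∈ A, z k‖ ^ 2 = (Q : ℝ) ^ 2 * ‖∑ k ∈ A, z k‖ ^ 2 := by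
      rw [norm_mul, mul_pow]
      norm_num
    rw [← this, ← h1]
    exact hCS
  -- rewrite the right-hand side of the goal
  have hWq : ∀ q : ℤ, ∑ k ∈ A.filter (fun k => (K : ℤ) < k + q ∧ k + q ≤ 2 * K),
      z k * (starRingEnd ℂ) (z (k + q)) = W q := by
    intro q
    rw [hWdef, Finset.sum_filter]
    refine Finset.sum_congr rfl (fun k hk => ?_)
    by_cases h : (K : ℤ) < k + q ∧ k + q ≤ 2 * K
    · rw [if_pos h, hfe k hk, hfe (k + q) (by rw [hA, Finset.mem_Ioc]; exact h)]
    · rw [if_neg h, hfz (k + q) (by rw [hA, Finset.mem_Ioc]; exact h), map_zero, mul_zero]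
  have hcoefR : ∀ q : ℤ, (1 - (|q| : ℝ) / Q : ℝ) = (Q:ℝ)⁻¹ * (((Q:ℤ) - |q| : ℤ) : ℝ) := by
    intro q
    have hQ0 : (Q : ℝ) ≠ 0 := by positivity
    have hc : (((Q:ℤ) - |q| : ℤ) : ℝ) = (Q:ℝ) - ((|q| : ℤ) : ℝ) := by push_cast; ring
    rw [hc]
    field_simp
    rw [Int.cast_abs]
  have hcoef : ∀ q : ℤ, ((1 - (|q| : ℝ) / Q : ℝ) : ℂ)
      = (((Q:ℝ)⁻¹ : ℝ) : ℂ) * (((Q:ℤ) - |q| : ℤ) : ℂ) := by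
    intro q
    rw [hcoefR q, Complex.ofReal_mul, Complex.ofReal_intCast]
  have hrhs : ∑ q ∈ Finset.Ioo (-(Q:ℤ)) (Q:ℤ),
        ((1 - (|q| : ℝ) / Q : ℝ) : ℂ) *
          ∑ k ∈ A.filter (fun k => (K : ℤ) < k + q ∧ k + q ≤ 2 * K),
            z k * (starRingEnd ℂ) (z (k + q))
      = (((Q:ℝ)⁻¹ : ℝ) : ℂ) * ∑ q ∈ Finset.Ioo (-(Q:ℤ)) (Q:ℤ), (((Q:ℤ) - |q| : ℤ) : ℂ) * W q := by
    rw [Finset.mul_sum]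
    refine Finset.sum_congr rfl (fun q _ => ?_)
    rw [hWq q, hcoef q, mul_assoc]
  rw [hrhs, Complex.re_ofReal_mul, ← hEr]
  have hQR : (0 : ℝ) < Q := by positivity
  rw [show ((K : ℝ) + Q) / Q * ((Q:ℝ)⁻¹ * Er) = (((K : ℝ) + Q) * Er) / (Q ^ 2) by
    rw [inv_mul_eq_div, div_mul_div_comm, ← pow_two]]
  rw [le_div_iff₀ (by positivity)]
  nlinarith [hmain]
end

section
/- There is an absolute constant C such that for all N ≥ 2, all real H ≥ 1, and all N₁ with N < N₁ ≤ 2N, the sum Σ₁ := ∑_{N < n ≤ N₁} Λ(n) ∑_{0 < |h| ≤ H} (1/(2πih)) [ e(h·Li(n)) − e(h·Li(n+1)) ] satisfies |Σ₁| ≤ (C/log N) · max_{N < N₂ ≤ 2N} ∑_{1 ≤ h ≤ H} | ∑_{N < n ≤ N₂} Λ(n) e(h·Li(n)) |. -/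
open Real Finset ArithmeticFunction

noncomputable section

/-- The logarithmic integral `Li(x) = ∫₂ˣ dt / log t`. -/
noncomputable def Li (x : ℝ) : ℝ := ∫ t in (2:ℝ)..x, 1 / Real.log t

/-- `e(x) = exp(2πix)`. -/
noncomputable def e (x : ℝ) : ℂ := Complex.exp (2 * Real.pi * Complex.I * x)

namespace SigmaOneAux

lemma e_add (x y : ℝ) : e (x + y) = e x * e y := by
  rw [e, e, e, ← Complex.exp_add]; push_cast; ring_nf

lemma two_pi_I_h_ne (h : ℤ) (hh : h ≠ 0) : 2 * (Real.pi : ℂ) * Complex.I * h ≠ 0 := by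
  have h1 : (h : ℂ) ≠ 0 := Int.cast_ne_zero.mpr hh
  have hpi : (Real.pi : ℂ) ≠ 0 := Complex.ofReal_ne_zero.mpr Real.pi_ne_zero
  simp [Complex.I_ne_zero, h1, hpi]

lemma key_norm (h : ℤ) (hh : h ≠ 0) (x y : ℝ) :
    ‖(1 / (2 * (Real.pi : ℂ) * Complex.I * h)) * (e ((h:ℝ) * x) - e ((h:ℝ) * y))‖ ≤ |x - y| := by
  set c : ℂ := 2 * (Real.pi : ℂ) * Complex.I * h with hc
  have hc0 : c ≠ 0 := two_pi_I_h_ne h hh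
  have he : ∀ t : ℝ, e ((h:ℝ) * t) = Complex.exp (c * t) := by
    intro t; rw [e]; congr 1; push_cast; ring
  have hint : (∫ t in y..x, Complex.exp (c * t)) = (Complex.exp (c * x) - Complex.exp (c * y)) / c :=
    integral_exp_mul_complex hc0
  have heq : (1 / c) * (e ((h:ℝ) * x) - e ((h:ℝ) * y)) = ∫ t in y..x, Complex.exp (c * t) := by
    rw [hint, he, he]; field_simp
  rw [heq]
  have hb : ∀ t ∈ Set.uIoc y x, ‖Complex.exp (c * t)‖ ≤ 1 := by
    intro t _
    have harg : c * t = ((2 * Real.pi * h * t : ℝ) : ℂ) * Complex.I := by push_cast; ring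
    rw [harg, Complex.norm_exp_ofReal_mul_I]
  calc ‖∫ t in y..x, Complex.exp (c * t)‖ ≤ 1 * |x - y| :=
        intervalIntegral.norm_integral_le_of_norm_le_const hb
    _ = |x - y| := one_mul _

lemma intInt_one_div_log {a b : ℝ} (ha : 2 ≤ a) (hb : 2 ≤ b) :
    IntervalIntegrable (fun t => 1 / Real.log t) MeasureTheory.volume a b := by
  apply ContinuousOn.intervalIntegrable
  have hsub : Set.uIcc a b ⊆ {t : ℝ | 2 ≤ t} := fun t ht => le_trans (le_min ha hb) ht.1
  apply ContinuousOn.div continuousOn_const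
  · exact Real.continuousOn_log.mono (fun t ht => by
      have : (2:ℝ) ≤ t := hsub ht
      simp only [Set.mem_compl_iff, Set.mem_singleton_iff]
      intro h0; rw [h0] at this; linarith)
  · intro t ht
    have h2 : 2 ≤ t := hsub ht
    exact ne_of_gt (Real.log_pos (by linarith))

lemma Li_sub {a b : ℝ} (ha : 2 ≤ a) (hb : 2 ≤ b) :
    Li b - Li a = ∫ t in a..b, 1 / Real.log t := by
  rw [Li, Li]
  exact intervalIntegral.integral_interval_sub_left (intInt_one_div_log le_rfl hb)
    (intInt_one_div_log le_rfl ha)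

/-- The increment `Li(n+1) - Li(n)`. -/
def dlt (n : ℕ) : ℝ := Li ((n:ℝ) + 1) - Li n

lemma dlt_eq {n : ℕ} (hn : 2 ≤ n) : dlt n = ∫ t in (n:ℝ)..((n:ℝ)+1), 1 / Real.log t := by
  have hnR : (2:ℝ) ≤ n := by exact_mod_cast hn
  rw [dlt]
  exact Li_sub hnR (by linarith)

lemma dlt_nonneg {n : ℕ} (hn : 2 ≤ n) : 0 ≤ dlt n := by
  have hnR : (2:ℝ) ≤ n := by exact_mod_cast hn
  rw [dlt_eq hn]
  apply intervalIntegral.integral_nonneg (by linarith)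
  intro t ht
  have h2 : (2:ℝ) ≤ t := le_trans hnR ht.1
  have : 0 ≤ Real.log t := Real.log_nonneg (by linarith)
  positivity

lemma dlt_le {n N : ℕ} (hN : 2 ≤ N) (hn : N ≤ n) : dlt n ≤ 1 / Real.log N := by
  have hn2 : 2 ≤ n := le_trans hN hn
  have hNR : (2:ℝ) ≤ N := by exact_mod_cast hN
  have hnN : (N:ℝ) ≤ n := by exact_mod_cast hn
  have hlogN : 0 < Real.log N := Real.log_pos (by linarith)
  rw [dlt_eq hn2]
  have hb : ∀ t ∈ Set.uIoc (n:ℝ) ((n:ℝ)+1), ‖1 / Real.log t‖ ≤ 1 / Real.log N := by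
    intro t ht
    rw [Set.uIoc_of_le (by linarith)] at ht
    have hNt : (N:ℝ) ≤ t := le_trans hnN (le_of_lt ht.1)
    have hlogt : Real.log N ≤ Real.log t := Real.log_le_log (by linarith) hNt
    have hlt : 0 < Real.log t := lt_of_lt_of_le hlogN hlogt
    rw [Real.norm_eq_abs, abs_of_nonneg (by positivity)]
    exact one_div_le_one_div_of_le hlogN hlogt
  calc (∫ t in (n:ℝ)..((n:ℝ)+1), 1 / Real.log t)
      ≤ |∫ t in (n:ℝ)..((n:ℝ)+1), 1 / Real.log t| := le_abs_self _
    _ = ‖∫ t in (n:ℝ)..((n:ℝ)+1), 1 / Real.log t‖ := (Real.norm_eq_abs _).symm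
    _ ≤ (1 / Real.log N) * |(n:ℝ) + 1 - n| := intervalIntegral.norm_integral_le_of_norm_le_const hb
    _ = 1 / Real.log N := by simp

lemma dlt_succ_le {n : ℕ} (hn : 2 ≤ n) : dlt (n + 1) ≤ dlt n := by
  have hnR : (2:ℝ) ≤ n := by exact_mod_cast hn
  rw [dlt_eq (by omega : 2 ≤ n + 1), dlt_eq hn]
  have hcomp : (∫ t in ((n+1:ℕ):ℝ)..(((n+1:ℕ):ℝ)+1), 1 / Real.log t)
      = ∫ t in (n:ℝ)..((n:ℝ)+1), 1 / Real.log (t + 1) := by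
    rw [intervalIntegral.integral_comp_add_right (fun t => 1 / Real.log t) 1]
    congr 1 <;> push_cast <;> ring
  rw [hcomp]
  have hi1 : IntervalIntegrable (fun t => 1 / Real.log (t+1)) MeasureTheory.volume (n:ℝ) ((n:ℝ)+1) := by
    have h := (intInt_one_div_log (a := (n:ℝ)+1) (b := (n:ℝ)+2) (by linarith) (by linarith)).comp_add_right 1
    have e1 : (n:ℝ)+1-1 = (n:ℝ) := by ring
    have e2 : (n:ℝ)+2-1 = (n:ℝ)+1 := by ring
    rwa [e1, e2] at h
  apply intervalIntegral.integral_mono_on (by linarith) hi1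
    (intInt_one_div_log (by linarith) (by linarith))
  intro t ht
  have h2 : (2:ℝ) ≤ t := le_trans hnR ht.1
  have l1 : 0 < Real.log t := Real.log_pos (by linarith)
  exact one_div_le_one_div_of_le l1 (Real.log_le_log (by linarith) (by linarith))

lemma abel_sum (a w : ℕ → ℂ) (N : ℕ) : ∀ m : ℕ, N ≤ m →
    ∑ n ∈ Ioc N (m+1), a n * w n =
      (∑ n ∈ Ioc N (m+1), a n) * w (m+1) +
        ∑ k ∈ Ioc N m, (∑ n ∈ Ioc N k, a n) * (w k - w (k+1)) := by
  intro m hm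
  induction m, hm using Nat.le_induction with
  | base =>
      rw [Finset.sum_Ioc_succ_top (le_refl N), Finset.sum_Ioc_succ_top (le_refl N)]
      simp
  | succ m hm ih =>
      have h1 := Finset.sum_Ioc_succ_top (by omega : N ≤ m+1) (fun n => a n * w n)
      have h2 := Finset.sum_Ioc_succ_top (by omega : N ≤ m+1) a
      have h3 := Finset.sum_Ioc_succ_top (by omega : N ≤ m)
        (fun k => (∑ n ∈ Ioc N k, a n) * (w k - w (k+1)))
      rw [h1, ih, h2, h3]
      ring

lemma telescope (g : ℕ → ℝ) (N : ℕ) : ∀ m : ℕ, N ≤ m →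
    ∑ k ∈ Ioc N m, (g k - g (k+1)) = g (N+1) - g (m+1) := by
  intro m hm
  induction m, hm using Nat.le_induction with
  | base => simp
  | succ m hm ih =>
      rw [Finset.sum_Ioc_succ_top (by omega : N ≤ m), ih]
      ring

lemma pair_sum (m : ℤ) (g : ℤ → ℝ) :
    ∑ h ∈ (Finset.Icc (-m) m).filter (fun h : ℤ => h ≠ 0), g h
      = ∑ h ∈ Finset.Icc 1 m, (g h + g (-h)) := by
  have hset : (Finset.Icc (-m) m).filter (fun h : ℤ => h ≠ 0)
      = Finset.Icc 1 m ∪ Finset.Icc (-m) (-1) := by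
    ext x; simp only [Finset.mem_filter, Finset.mem_Icc, Finset.mem_union]; omega
  rw [hset, Finset.sum_union (by
    rw [Finset.disjoint_left]; intro x hx hx'
    simp only [Finset.mem_Icc] at hx hx'; omega)]
  have himg : Finset.Icc (-m) (-1) = Finset.image (fun h : ℤ => -h) (Finset.Icc 1 m) := by
    ext x
    simp only [Finset.mem_Icc, Finset.mem_image]
    constructor
    · intro hx; exact ⟨-x, by omega, by omega⟩
    · rintro ⟨y, hy, rfl⟩; omega
  rw [himg, Finset.sum_image (fun x _ y _ h => neg_injective h), Finset.sum_add_distrib]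

lemma e_neg (x : ℝ) : e (-x) = (starRingEnd ℂ) (e x) := by
  rw [e, e, ← Complex.exp_conj]
  congr 1
  simp only [map_mul, Complex.conj_I, Complex.conj_ofReal, map_ofNat]
  push_cast
  ring

lemma norm_S_neg (N k : ℕ) (h : ℤ) :
    ‖∑ n ∈ Ioc N k, (Λ n : ℂ) * e ((((-h) : ℤ):ℝ) * Li n)‖
      = ‖∑ n ∈ Ioc N k, (Λ n : ℂ) * e ((h:ℝ) * Li n)‖ := by
  have key : ∑ n ∈ Ioc N k, (Λ n : ℂ) * e ((((-h) : ℤ):ℝ) * Li n)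
      = (starRingEnd ℂ) (∑ n ∈ Ioc N k, (Λ n : ℂ) * e ((h:ℝ) * Li n)) := by
    rw [map_sum]
    apply Finset.sum_congr rfl
    intro n _
    rw [map_mul, Complex.conj_ofReal, ← e_neg]
    congr 1
    push_cast
    ring
  rw [key, RCLike.norm_conj]

lemma reindex (H : ℝ) (f : ℝ → ℝ) :
    ∑ h ∈ Finset.Icc (1:ℤ) ⌊H⌋, f (h:ℝ) = ∑ h ∈ Finset.Icc (1:ℕ) ⌊H⌋₊, f (h:ℝ) := by
  apply Finset.sum_nbij' (i := fun h : ℤ => h.toNat) (j := fun h : ℕ => (h:ℤ))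
  · intro a ha
    simp only [Finset.mem_Icc] at ha ⊢
    rw [← Int.floor_toNat]
    omega
  · intro a ha
    simp only [Finset.mem_Icc] at ha ⊢
    rw [← Int.floor_toNat] at ha
    omega
  · intro a ha
    simp only [Finset.mem_Icc] at ha
    omega
  · intro a _; simp
  · intro a ha
    simp only [Finset.mem_Icc] at ha
    congr 1
    have h2 : ((a.toNat : ℕ) : ℤ) = a := by omega
    exact_mod_cast h2.symm

end SigmaOneAux

open SigmaOneAux

/-- `|Σ₁| ≤ (C / log N) · max_{N < N₂ ≤ 2N} ∑_{1 ≤ h ≤ H} |∑_{N < n ≤ N₂} Λ(n) e(h Li n)|`. -/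
theorem sigma_one_bound :
    ∃ C : ℝ, 0 < C ∧ ∀ N : ℕ, ∀ hN : 2 ≤ N, ∀ H : ℝ, 1 ≤ H → ∀ N₁ : ℕ, N < N₁ → N₁ ≤ 2 * N →
      ‖∑ n ∈ Finset.Ioc N N₁, (Λ n : ℂ) *
          ∑ h ∈ (Finset.Icc (-⌊H⌋) ⌊H⌋).filter (fun h : ℤ => h ≠ 0),
            (1 / (2 * (Real.pi : ℂ) * Complex.I * h)) *
              (e ((h : ℝ) * Li n) - e ((h : ℝ) * Li ((n : ℝ) + 1)))‖ ≤
        C / Real.log N *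
          ((Finset.Ioc N (2 * N)).sup'
            (Finset.nonempty_Ioc.mpr (by omega))
            (fun N₂ => ∑ h ∈ Finset.Icc 1 ⌊H⌋₊,
              ‖∑ n ∈ Finset.Ioc N N₂, (Λ n : ℂ) * e ((h : ℝ) * Li n)‖)) := by
  refine ⟨4, by norm_num, ?_⟩
  intro N hN H hH N₁ hNN₁ hN₁2N
  have hne : (Finset.Ioc N (2 * N)).Nonempty := Finset.nonempty_Ioc.mpr (by omega)
  set Msup : ℝ := (Finset.Ioc N (2 * N)).sup' hne
      (fun N₂ => ∑ h ∈ Finset.Icc 1 ⌊H⌋₊,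
        ‖∑ n ∈ Finset.Ioc N N₂, (Λ n : ℂ) * e ((h : ℝ) * Li n)‖) with hMsup
  show _ ≤ 4 / Real.log N * Msup
  set L := Real.log N with hLdef
  have hNR : (2:ℝ) ≤ N := by exact_mod_cast hN
  have hL0 : 0 < L := Real.log_pos (by linarith)
  set A := (Finset.Icc (-⌊H⌋) ⌊H⌋).filter (fun h : ℤ => h ≠ 0) with hA
  set S : ℤ → ℕ → ℂ := fun h k => ∑ n ∈ Finset.Ioc N k, (Λ n : ℂ) * e ((h:ℝ) * Li n) with hS
  set w : ℤ → ℕ → ℂ := fun h n =>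
    (1 / (2 * (Real.pi : ℂ) * Complex.I * h)) * (1 - e ((h:ℝ) * dlt n)) with hw
  -- the key bound on the sums over h of |S h k|
  have hMkey : ∀ k ∈ Finset.Ioc N (2 * N), ∑ h ∈ A, ‖S h k‖ ≤ 2 * Msup := by
    intro k hk
    have h1 : ∑ h ∈ A, ‖S h k‖ = ∑ h ∈ Finset.Icc (1:ℤ) ⌊H⌋, (‖S h k‖ + ‖S (-h) k‖) :=
      pair_sum ⌊H⌋ (fun h => ‖S h k‖)
    have h2 : ∀ h ∈ Finset.Icc (1:ℤ) ⌊H⌋, ‖S h k‖ + ‖S (-h) k‖ = 2 * ‖S h k‖ := by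
      intro h _
      rw [hS]
      simp only
      rw [norm_S_neg N k h]
      ring
    have h3 : ∑ h ∈ Finset.Icc (1:ℤ) ⌊H⌋, ‖S h k‖
        = ∑ h ∈ Finset.Icc (1:ℕ) ⌊H⌋₊, ‖∑ n ∈ Finset.Ioc N k, (Λ n : ℂ) * e ((h:ℝ) * Li n)‖ :=
      reindex H (fun x => ‖∑ n ∈ Finset.Ioc N k, (Λ n : ℂ) * e (x * Li n)‖)
    have h4 : (∑ h ∈ Finset.Icc (1:ℕ) ⌊H⌋₊,
        ‖∑ n ∈ Finset.Ioc N k, (Λ n : ℂ) * e ((h:ℝ) * Li n)‖) ≤ Msup := by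
      rw [hMsup]
      exact Finset.le_sup' (fun N₂ => ∑ h ∈ Finset.Icc 1 ⌊H⌋₊,
        ‖∑ n ∈ Finset.Ioc N N₂, (Λ n : ℂ) * e ((h : ℝ) * Li n)‖) hk
    calc ∑ h ∈ A, ‖S h k‖ = ∑ h ∈ Finset.Icc (1:ℤ) ⌊H⌋, (‖S h k‖ + ‖S (-h) k‖) := h1
      _ = ∑ h ∈ Finset.Icc (1:ℤ) ⌊H⌋, 2 * ‖S h k‖ := Finset.sum_congr rfl h2
      _ = 2 * ∑ h ∈ Finset.Icc (1:ℤ) ⌊H⌋, ‖S h k‖ := by rw [Finset.mul_sum]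
      _ ≤ 2 * Msup := by rw [h3]; linarith [h4]
  have hMsup0 : 0 ≤ Msup := by
    rw [hMsup]
    refine le_trans ?_ (Finset.le_sup' (fun N₂ => ∑ h ∈ Finset.Icc 1 ⌊H⌋₊,
      ‖∑ n ∈ Finset.Ioc N N₂, (Λ n : ℂ) * e ((h : ℝ) * Li n)‖)
      (Finset.mem_Ioc.mpr ⟨hNN₁, hN₁2N⟩))
    positivity
  -- rewrite the main sum using Abel summation
  have hrw : ∑ n ∈ Finset.Ioc N N₁, (Λ n : ℂ) *
        ∑ h ∈ A, (1 / (2 * (Real.pi : ℂ) * Complex.I * h)) *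
          (e ((h : ℝ) * Li n) - e ((h : ℝ) * Li ((n : ℝ) + 1)))
      = ∑ h ∈ A, (S h N₁ * w h N₁ +
          ∑ k ∈ Finset.Ioc N (N₁ - 1), S h k * (w h k - w h (k+1))) := by
    have step1 : ∑ n ∈ Finset.Ioc N N₁, (Λ n : ℂ) *
          ∑ h ∈ A, (1 / (2 * (Real.pi : ℂ) * Complex.I * h)) *
            (e ((h : ℝ) * Li n) - e ((h : ℝ) * Li ((n : ℝ) + 1)))
        = ∑ n ∈ Finset.Ioc N N₁, ∑ h ∈ A, ((Λ n : ℂ) * e ((h:ℝ) * Li n)) * w h n := by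
      apply Finset.sum_congr rfl
      intro n _
      rw [Finset.mul_sum]
      apply Finset.sum_congr rfl
      intro h _
      have harg : (h:ℝ) * Li ((n:ℝ) + 1) = (h:ℝ) * Li n + (h:ℝ) * dlt n := by
        rw [dlt]; ring
      rw [harg, e_add, hw]
      ring
    rw [step1, Finset.sum_comm]
    apply Finset.sum_congr rfl
    intro h _
    have key := abel_sum (fun n => (Λ n : ℂ) * e ((h:ℝ) * Li n)) (w h) N (N₁ - 1)
      (by omega)
    have hfix : N₁ - 1 + 1 = N₁ := by omega
    rw [hfix] at key
    exact key
  rw [hrw]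
  -- bound everything
  have hwbound : ∀ h ∈ A, ∀ n : ℕ, N ≤ n → ‖w h n‖ ≤ 1 / L := by
    intro h hh n hn
    have hh0 : h ≠ 0 := (Finset.mem_filter.mp hh).2
    have hone : (1:ℂ) - e ((h:ℝ) * dlt n) = e ((h:ℝ) * 0) - e ((h:ℝ) * dlt n) := by
      simp [e]
    have hkn := key_norm h hh0 0 (dlt n)
    rw [hw]
    simp only
    rw [hone]
    refine le_trans hkn ?_
    rw [zero_sub, abs_neg, abs_of_nonneg (dlt_nonneg (by omega))]
    exact dlt_le hN hn
  have hwdiff : ∀ h ∈ A, ∀ k : ℕ, N < k → ‖w h k - w h (k+1)‖ ≤ dlt k - dlt (k+1) := by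
    intro h hh k hk
    have hh0 : h ≠ 0 := (Finset.mem_filter.mp hh).2
    have heq : w h k - w h (k+1)
        = (1 / (2 * (Real.pi : ℂ) * Complex.I * h)) *
            (e ((h:ℝ) * dlt (k+1)) - e ((h:ℝ) * dlt k)) := by
      rw [hw]; ring
    rw [heq]
    refine le_trans (key_norm h hh0 (dlt (k+1)) (dlt k)) ?_
    rw [abs_of_nonpos (by linarith [dlt_succ_le (show 2 ≤ k by omega)])]
    ring_nf
    linarith
  have hdnn : ∀ k : ℕ, N < k → 0 ≤ dlt k - dlt (k+1) := by
    intro k hk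
    linarith [dlt_succ_le (show 2 ≤ k by omega)]
  calc ‖∑ h ∈ A, (S h N₁ * w h N₁ +
          ∑ k ∈ Finset.Ioc N (N₁ - 1), S h k * (w h k - w h (k+1)))‖
      ≤ ∑ h ∈ A, ‖S h N₁ * w h N₁ +
          ∑ k ∈ Finset.Ioc N (N₁ - 1), S h k * (w h k - w h (k+1))‖ := norm_sum_le _ _
    _ ≤ ∑ h ∈ A, (‖S h N₁‖ * (1/L) +
          ∑ k ∈ Finset.Ioc N (N₁ - 1), ‖S h k‖ * (dlt k - dlt (k+1))) := by
        apply Finset.sum_le_sum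
        intro h hh
        refine le_trans (norm_add_le _ _) (add_le_add ?_ ?_)
        · rw [norm_mul]
          exact mul_le_mul_of_nonneg_left (hwbound h hh N₁ (le_of_lt hNN₁)) (norm_nonneg _)
        · refine le_trans (norm_sum_le _ _) (Finset.sum_le_sum ?_)
          intro k hk
          rw [norm_mul]
          exact mul_le_mul_of_nonneg_left
            (hwdiff h hh k (Finset.mem_Ioc.mp hk).1) (norm_nonneg _)
    _ = (∑ h ∈ A, ‖S h N₁‖) * (1/L) +
          ∑ k ∈ Finset.Ioc N (N₁ - 1), (dlt k - dlt (k+1)) * (∑ h ∈ A, ‖S h k‖) := by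
        rw [Finset.sum_add_distrib, ← Finset.sum_mul, Finset.sum_comm]
        congr 1
        apply Finset.sum_congr rfl
        intro k _
        rw [Finset.mul_sum]
        apply Finset.sum_congr rfl
        intro h _
        ring
    _ ≤ (2 * Msup) * (1/L) +
          ∑ k ∈ Finset.Ioc N (N₁ - 1), (dlt k - dlt (k+1)) * (2 * Msup) := by
        apply add_le_add
        · exact mul_le_mul_of_nonneg_right
            (hMkey N₁ (Finset.mem_Ioc.mpr ⟨hNN₁, hN₁2N⟩)) (by positivity)
        · apply Finset.sum_le_sum
          intro k hk
          have hk' := Finset.mem_Ioc.mp hk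
          exact mul_le_mul_of_nonneg_left
            (hMkey k (Finset.mem_Ioc.mpr ⟨hk'.1, by omega⟩)) (hdnn k hk'.1)
    _ = (2 * Msup) * (1/L) + (dlt (N+1) - dlt (N₁ - 1 + 1)) * (2 * Msup) := by
        rw [← Finset.sum_mul, telescope dlt N (N₁ - 1) (by omega)]
    _ ≤ (2 * Msup) * (1/L) + (1/L) * (2 * Msup) := by
        have h1 : dlt (N+1) ≤ 1 / L := dlt_le hN (by omega)
        have h2 : 0 ≤ dlt (N₁ - 1 + 1) := dlt_nonneg (by omega)
        have : dlt (N+1) - dlt (N₁ - 1 + 1) ≤ 1 / L := by linarith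
        nlinarith
    _ = 4 / L * Msup := by ring
end
end

section
/- (Vaughan's identity) Let u, v be positive integers. For every integer n > v, Λ(n) = ∑_{kℓ = n, k > v, ℓ > u} Λ(k) ( ∑_{d | ℓ, d > u} μ(d) ) + ∑_{kℓ = n, ℓ ≤ u} μ(ℓ) log k − ∑_{kℓm = n, ℓ ≤ v, m ≤ u} Λ(ℓ) μ(m), where all sums run over positive integers. -/
open Real Finset ArithmeticFunction ArithmeticFunction.Moebius
open ArithmeticFunction.zeta

namespace VaughanAux

noncomputable def Lgt (v : ℕ) : ArithmeticFunction ℝ :=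
  ⟨fun k => if v < k then Λ k else 0, by simp⟩

noncomputable def Lle (v : ℕ) : ArithmeticFunction ℝ :=
  ⟨fun k => if k ≤ v then Λ k else 0, by simp⟩

def Mgt (u : ℕ) : ArithmeticFunction ℝ :=
  ⟨fun k => if u < k then (μ k : ℝ) else 0, by simp⟩

def Mle (u : ℕ) : ArithmeticFunction ℝ :=
  ⟨fun k => if k ≤ u then (μ k : ℝ) else 0, by simp⟩

lemma key (u v : ℕ) :
    Lgt v * (Mgt u * (ζ : ArithmeticFunction ℝ)) + ((Λ : ArithmeticFunction ℝ) * ζ) * Mle u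
      - (ζ : ArithmeticFunction ℝ) * (Lle v * Mle u) = Lgt v := by
  have hΛ : (Λ : ArithmeticFunction ℝ) = Lgt v + Lle v := by
    ext k
    simp only [ArithmeticFunction.add_apply]; simp only [Lgt, Lle, coe_mk]
    rcases le_or_gt k v with h | h
    · simp [h, not_lt.2 h]
    · simp [h, not_le.2 h]
  have hμ : Mgt u + Mle u = ((μ : ArithmeticFunction ℤ) : ArithmeticFunction ℝ) := by
    ext k
    simp only [ArithmeticFunction.add_apply]; simp only [Mgt, Mle, coe_mk, intCoe_apply]
    rcases le_or_gt k u with h | h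
    · simp [h, not_lt.2 h]
    · simp [h, not_le.2 h]
  have h1 : (Mgt u + Mle u) * (ζ : ArithmeticFunction ℝ) = 1 := by
    rw [hμ]; exact coe_moebius_mul_coe_zeta
  rw [hΛ]
  linear_combination (Lgt v) * h1

lemma evalA (u v n : ℕ) :
    (Lgt v * (Mgt u * (ζ : ArithmeticFunction ℝ))) n =
      ∑ p ∈ n.divisorsAntidiagonal.filter (fun p => v < p.1 ∧ u < p.2),
        Λ p.1 * (∑ d ∈ p.2.divisors.filter (fun d => u < d), (μ d : ℝ)) := by
  rw [mul_apply, sum_filter]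
  refine Finset.sum_congr rfl fun p hp => ?_
  have hp' := (Nat.mem_divisorsAntidiagonal.mp hp)
  have hp2 : 0 < p.2 := Nat.pos_of_ne_zero (fun h => hp'.2 (by rw [← hp'.1, h, mul_zero]))
  have hinner : (Mgt u * (ζ : ArithmeticFunction ℝ)) p.2 =
      ∑ d ∈ p.2.divisors.filter (fun d => u < d), (μ d : ℝ) := by
    rw [coe_mul_zeta_apply, sum_filter]
    exact Finset.sum_congr rfl fun d hd => rfl
  rw [hinner]
  show (if v < p.1 then Λ p.1 else 0) * _ = _
  rcases lt_or_ge v p.1 with h1 | h1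
  · rcases lt_or_ge u p.2 with h2 | h2
    · simp [h1, h2]
    · have hz : (p.2.divisors.filter (fun d => u < d)) = ∅ := by
        refine Finset.filter_eq_empty_iff.mpr fun d hd => ?_
        have := Nat.le_of_dvd hp2 (Nat.mem_divisors.mp hd).1
        omega
      simp [hz, h1, h2.not_gt]
  · simp [h1.not_gt]

lemma evalB (u n : ℕ) :
    (((Λ : ArithmeticFunction ℝ) * ζ) * Mle u) n =
      ∑ p ∈ n.divisorsAntidiagonal.filter (fun p => p.2 ≤ u),
        (μ p.2 : ℝ) * Real.log p.1 := by
  rw [vonMangoldt_mul_zeta, mul_apply, sum_filter]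
  refine Finset.sum_congr rfl fun p hp => ?_
  show ArithmeticFunction.log p.1 * (if p.2 ≤ u then (μ p.2 : ℝ) else 0) = _
  rw [log_apply]
  rcases le_or_gt p.2 u with h | h
  · simp [h, mul_comm]
  · simp [h.not_ge]

lemma evalC (u v n : ℕ) :
    ((ζ : ArithmeticFunction ℝ) * (Lle v * Mle u)) n =
      ∑ p ∈ n.divisorsAntidiagonal,
        ∑ q ∈ p.2.divisorsAntidiagonal.filter (fun q => q.1 ≤ v ∧ q.2 ≤ u),
          Λ q.1 * (μ q.2 : ℝ) := by
  rw [coe_zeta_mul_apply]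
  rw [Nat.sum_divisorsAntidiagonal' (f := fun _ l =>
    ∑ q ∈ l.divisorsAntidiagonal.filter (fun q => q.1 ≤ v ∧ q.2 ≤ u), Λ q.1 * (μ q.2 : ℝ))]
  refine Finset.sum_congr rfl fun i _ => ?_
  rw [mul_apply, sum_filter]
  refine Finset.sum_congr rfl fun q _ => ?_
  show (if q.1 ≤ v then Λ q.1 else 0) * (if q.2 ≤ u then (μ q.2 : ℝ) else 0) = _
  by_cases h1 : q.1 ≤ v <;> by_cases h2 : q.2 ≤ u <;> simp [h1, h2]

end VaughanAux

open VaughanAux in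
/-- Vaughan's identity. -/
theorem vaughan_identity (u v : ℕ) (hu : 0 < u) (hv : 0 < v) (n : ℕ) (hn : v < n) :
    Λ n =
      (∑ p ∈ n.divisorsAntidiagonal.filter (fun p => v < p.1 ∧ u < p.2),
        Λ p.1 * (∑ d ∈ p.2.divisors.filter (fun d => u < d), (μ d : ℝ)))
      + (∑ p ∈ n.divisorsAntidiagonal.filter (fun p => p.2 ≤ u),
          (μ p.2 : ℝ) * Real.log p.1)
      - (∑ p ∈ n.divisorsAntidiagonal,
          ∑ q ∈ p.2.divisorsAntidiagonal.filter (fun q => q.1 ≤ v ∧ q.2 ≤ u),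
            Λ q.1 * (μ q.2 : ℝ)) := by
  have key' : Lgt v * (Mgt u * (ζ : ArithmeticFunction ℝ))
      + ((Λ : ArithmeticFunction ℝ) * ζ) * Mle u
      = Lgt v + (ζ : ArithmeticFunction ℝ) * (Lle v * Mle u) := by
    linear_combination key u v
  have h := congrArg (fun f : ArithmeticFunction ℝ => f n) key'
  simp only [ArithmeticFunction.add_apply] at h
  rw [evalA u v n, evalB u n, evalC u v n] at h
  have hL : (Lgt v) n = Λ n := by simp [Lgt, hn]
  rw [hL] at h
  linarith
end
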